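/- Let Γ be a bipartite graph with parts P (|P| = p) and Q (|Q| = q), where p, q ≥ 6, such that no 3-element subset of P together with a 6-element subset of Q (nor a 6-element subset of P with a 3-element subset of Q) spans a complete bipartite subgraph K_{3,6}. Then e(Γ)/(pq) ≤ 17/18. -/

import Mathlib

open Finset

lemma aux_count {α : Type*} [Fintype α] [DecidableEq α] (k : ℕ) (a : α) :
    ((Finset.univ.powersetCard (k+1)).filter (fun S => a ∈ S)).card
      = (Fintype.card α - 1).choose k := by
  have h : ((Finset.univ.powersetCard (k+1)).filter (fun S => a ∈ S)).card
      = ((Finset.univ.erase a).powersetCard k).card := by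
    apply Finset.card_bij (fun S _ => S.erase a)
    · intro S hS
      simp only [mem_filter, mem_powersetCard] at hS
      simp only [mem_powersetCard]
      exact ⟨erase_subset_erase a hS.1.1, by rw [card_erase_of_mem hS.2, hS.1.2]; rfl⟩
    · intro S hS T hT h
      simp only [mem_filter] at hS hT
      rw [← insert_erase hS.2, h, insert_erase hT.2]
    · intro T hT
      simp only [mem_powersetCard] at hT
      have ha : a ∉ T := fun h => (mem_erase.1 (hT.1 h)).1 rfl
      refine ⟨insert a T, ?_, by rw [erase_insert ha]⟩
      simp only [mem_filter, mem_powersetCard]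
      exact ⟨⟨subset_univ _, by rw [card_insert_of_notMem ha, hT.2]⟩, mem_insert_self a T⟩
  rw [h, card_powersetCard, card_erase_of_mem (mem_univ a), card_univ]

/-- Extremal counting fact: if a bipartite graph `Γ ⊆ K_{p,q}` (`p, q ≥ 6`)
contains no complete bipartite subgraph `K_{3,6}` in either orientation, then
its edge density is at most `17/18`. -/
theorem stmt_8 (p q : ℕ) (hp : 6 ≤ p) (hq : 6 ≤ q)
    (E : Finset (Fin p × Fin q))
    (h36 : ∀ (S : Finset (Fin p)) (T : Finset (Fin q)), S.card = 3 → T.card = 6 →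
      ¬ (∀ u ∈ S, ∀ v ∈ T, (u, v) ∈ E))
    (h63 : ∀ (S : Finset (Fin p)) (T : Finset (Fin q)), S.card = 6 → T.card = 3 →
      ¬ (∀ u ∈ S, ∀ v ∈ T, (u, v) ∈ E)) :
    (E.card : ℝ) / (p * q) ≤ 17 / 18 := by
  classical
  have hp0 : 0 < p := by omega
  have hq0 : 0 < q := by omega
  set N : Finset (Fin p × Fin q) := Finset.univ \ E with hN
  -- every (3,6)-block contains a non-edge
  have key : ∀ x : Finset (Fin p) × Finset (Fin q),
      x.1 ∈ Finset.univ.powersetCard 3 → x.2 ∈ Finset.univ.powersetCard 6 →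
      ∃ n ∈ N, n.1 ∈ x.1 ∧ n.2 ∈ x.2 := by
    intro x hx1 hx2
    simp only [mem_powersetCard] at hx1 hx2
    have := h36 x.1 x.2 hx1.2 hx2.2
    push_neg at this
    obtain ⟨u, hu, v, hv, huv⟩ := this
    exact ⟨(u, v), by simp [hN, huv], hu, hv⟩
  -- choice function
  have hinhab : Inhabited (Fin p × Fin q) := ⟨⟨⟨0, hp0⟩, ⟨0, hq0⟩⟩⟩
  set A : Finset (Finset (Fin p) × Finset (Fin q)) :=
    (Finset.univ.powersetCard 3) ×ˢ (Finset.univ.powersetCard 6) with hA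
  set f : Finset (Fin p) × Finset (Fin q) → Fin p × Fin q := fun x =>
    if h : ∃ n ∈ N, n.1 ∈ x.1 ∧ n.2 ∈ x.2 then h.choose else hinhab.default with hf
  have hfspec : ∀ x ∈ A, f x ∈ N ∧ (f x).1 ∈ x.1 ∧ (f x).2 ∈ x.2 := by
    intro x hx
    simp only [hA, mem_product] at hx
    have h := key x hx.1 hx.2
    simp only [hf, dif_pos h]
    exact h.choose_spec
  have hmap : ∀ x ∈ A, f x ∈ N := fun x hx => (hfspec x hx).1
  have hcount : A.card = ∑ n ∈ N, (A.filter (fun x => f x = n)).card :=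
    Finset.card_eq_sum_card_fiberwise hmap
  -- fiber bound
  have hfiber : ∀ n ∈ N, (A.filter (fun x => f x = n)).card ≤
      (p - 1).choose 2 * (q - 1).choose 5 := by
    intro n _
    have hsub : A.filter (fun x => f x = n) ⊆
        ((Finset.univ.powersetCard 3).filter (fun S => n.1 ∈ S)) ×ˢ
        ((Finset.univ.powersetCard 6).filter (fun T => n.2 ∈ T)) := by
      intro x hx
      simp only [mem_filter] at hx
      obtain ⟨hxA, hxn⟩ := hx
      have := hfspec x hxA
      rw [hxn] at this
      simp only [hA, mem_product] at hxA
      simp only [mem_product, mem_filter]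
      exact ⟨⟨hxA.1, this.2.1⟩, hxA.2, this.2.2⟩
    calc (A.filter (fun x => f x = n)).card ≤ _ := Finset.card_le_card hsub
      _ = (p - 1).choose 2 * (q - 1).choose 5 := by
          rw [Finset.card_product]
          rw [aux_count 2 n.1, aux_count 5 n.2, Fintype.card_fin, Fintype.card_fin]
  have hAcard : A.card = p.choose 3 * q.choose 6 := by
    simp [hA, Finset.card_product, card_powersetCard, card_univ]
  have main : p.choose 3 * q.choose 6 ≤ N.card * ((p - 1).choose 2 * (q - 1).choose 5) := by
    rw [← hAcard, hcount]
    calc ∑ n ∈ N, (A.filter (fun x => f x = n)).card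
        ≤ ∑ _n ∈ N, (p - 1).choose 2 * (q - 1).choose 5 := Finset.sum_le_sum hfiber
      _ = N.card * ((p - 1).choose 2 * (q - 1).choose 5) := by rw [Finset.sum_const, smul_eq_mul]
  -- choose identities
  have hid1 : p * (p - 1).choose 2 = p.choose 3 * 3 := by
    have := Nat.add_one_mul_choose_eq (p - 1) 2
    rwa [Nat.sub_add_cancel (by omega : 1 ≤ p)] at this
  have hid2 : q * (q - 1).choose 5 = q.choose 6 * 6 := by
    have := Nat.add_one_mul_choose_eq (q - 1) 5
    rwa [Nat.sub_add_cancel (by omega : 1 ≤ q)] at this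
  have hc1 : 0 < (p - 1).choose 2 := Nat.choose_pos (by omega)
  have hc2 : 0 < (q - 1).choose 5 := Nat.choose_pos (by omega)
  -- p * q ≤ 18 * N.card
  have hpq : p * q ≤ 18 * N.card := by
    have h18 : p * q * ((p - 1).choose 2 * (q - 1).choose 5)
        = 18 * (p.choose 3 * q.choose 6) := by
      calc p * q * ((p - 1).choose 2 * (q - 1).choose 5)
          = (p * (p - 1).choose 2) * (q * (q - 1).choose 5) := by ring
        _ = (p.choose 3 * 3) * (q.choose 6 * 6) := by rw [hid1, hid2]
        _ = 18 * (p.choose 3 * q.choose 6) := by ring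
    have : p * q * ((p - 1).choose 2 * (q - 1).choose 5)
        ≤ 18 * N.card * ((p - 1).choose 2 * (q - 1).choose 5) := by
      rw [h18]
      calc 18 * (p.choose 3 * q.choose 6)
          ≤ 18 * (N.card * ((p - 1).choose 2 * (q - 1).choose 5)) :=
            Nat.mul_le_mul_left 18 main
        _ = 18 * N.card * ((p - 1).choose 2 * (q - 1).choose 5) := by ring
    exact Nat.le_of_mul_le_mul_right this (Nat.mul_pos hc1 hc2)
  -- conclude
  have hEN : E.card + N.card = p * q := by
    have hE : E ⊆ Finset.univ := Finset.subset_univ E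
    have h2 : N.card = (Finset.univ : Finset (Fin p × Fin q)).card - E.card := by
      rw [hN]; exact Finset.card_sdiff_of_subset hE
    have hle : E.card ≤ (Finset.univ : Finset (Fin p × Fin q)).card := Finset.card_le_card hE
    have hu : (Finset.univ : Finset (Fin p × Fin q)).card = p * q := by
      rw [Finset.card_univ, Fintype.card_prod, Fintype.card_fin, Fintype.card_fin]
    omega
  have h18E : 18 * E.card ≤ 17 * (p * q) := by omega
  have hpq0 : (0 : ℝ) < (p : ℝ) * q := by positivity
  rw [div_le_div_iff₀ hpq0 (by norm_num : (0:ℝ) < 18)]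
  have := (Nat.cast_le (α := ℝ)).2 h18E
  push_cast at this ⊢
  linarith
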